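/- Let n ≥ 1 be an integer, φ = π/(2n), P = P(φ) = [[1, -tan φ],[0,0]], R = R(φ) the rotation by 2φ. For any finite sequence B_1, …, B_m with each B_i ∈ {P, R}, the operator norm (with respect to the Euclidean norm on ℝ²) satisfies ‖B_m B_{m-1} ⋯ B_1‖ ≤ ‖P(φ)‖. -/

import Mathlib

open Real Matrix

noncomputable def P (φ : ℝ) : Matrix (Fin 2) (Fin 2) ℝ := !![1, -Real.tan φ; 0, 0]

noncomputable def R (φ : ℝ) : Matrix (Fin 2) (Fin 2) ℝ :=
  !![Real.cos (2*φ), -Real.sin (2*φ); Real.sin (2*φ), Real.cos (2*φ)]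

noncomputable def opNorm (A : Matrix (Fin 2) (Fin 2) ℝ) : ℝ :=
  ‖Matrix.toEuclideanCLM (𝕜 := ℝ) A‖

open scoped Matrix.Norms.L2Operator

lemma opNorm_eq (A : Matrix (Fin 2) (Fin 2) ℝ) : opNorm A = ‖A‖ := rfl

-- ‖R ψ‖ ≤ 1
lemma norm_R_le (ψ : ℝ) : ‖R ψ‖ ≤ 1 := by
  rw [Matrix.l2_opNorm_def]
  apply ContinuousLinearMap.opNorm_le_bound _ zero_le_one
  intro x
  rw [one_mul]
  have hx : ‖x‖ = Real.sqrt (x 0 ^ 2 + x 1 ^ 2) := by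
    rw [EuclideanSpace.norm_eq]
    simp [Fin.sum_univ_two, sq_abs, sq]
  have hAx : ∀ y : EuclideanSpace ℝ (Fin 2), ‖y‖ = Real.sqrt (y 0 ^ 2 + y 1 ^ 2) := by
    intro y
    rw [EuclideanSpace.norm_eq]
    simp [Fin.sum_univ_two, sq_abs, sq]
  rw [hAx, hx]
  apply Real.sqrt_le_sqrt
  have happ : ∀ i, (LinearEquiv.trans Matrix.toEuclideanLin
      LinearMap.toContinuousLinearMap (R ψ)) x i = (R ψ).mulVec x i := fun i => rfl
  rw [happ, happ]
  have h := Real.sin_sq_add_cos_sq (2*ψ)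
  simp [R, Matrix.mulVec, dotProduct, Fin.sum_univ_two]
  nlinarith [h]

lemma one_le_norm_P (φ : ℝ) : (1 : ℝ) ≤ ‖P φ‖ := by
  have h := Matrix.l2_opNorm_mulVec (P φ) ((EuclideanSpace.equiv (Fin 2) ℝ).symm ![1, 0])
  have hx : ‖(EuclideanSpace.equiv (Fin 2) ℝ).symm ![(1:ℝ), 0]‖ = 1 := by
    rw [EuclideanSpace.norm_eq]
    simp [Fin.sum_univ_two]
  have hmv : P φ *ᵥ ((EuclideanSpace.equiv (Fin 2) ℝ).symm ![(1:ℝ), 0]) = ![1, 0] := by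
    funext i
    fin_cases i <;> simp [P, Matrix.mulVec, dotProduct, Fin.sum_univ_two,
      EuclideanSpace.equiv]
  rw [hmv, hx, mul_one] at h
  exact h

-- powers of R
lemma R_pow (φ : ℝ) (k : ℕ) : R φ ^ k = R (k * φ) := by
  induction k with
  | zero =>
    rw [pow_zero, Matrix.one_fin_two]
    simp [R]
  | succ k ih =>
    rw [pow_succ, ih]
    unfold R
    rw [Matrix.mul_fin_two]
    push_cast
    rw [show (2:ℝ)*(((k:ℝ)+1)*φ) = 2*((k:ℝ)*φ)+2*φ by ring, Real.cos_add, Real.sin_add]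
    ext i j
    fin_cases i <;> fin_cases j <;> simp <;> ring

lemma P_mul_R_mul_P (φ ψ : ℝ) :
    P φ * (R ψ * P φ) = (Real.cos (2*ψ) - Real.tan φ * Real.sin (2*ψ)) • P φ := by
  unfold P R
  ext i j
  fin_cases i <;> fin_cases j <;>
    simp [Matrix.mul_apply, Fin.sum_univ_two, Matrix.smul_apply] <;> ring

lemma abs_cos_add_nat_mul_pi (x : ℝ) (q : ℕ) : |Real.cos (x + q * π)| = |Real.cos x| := by
  induction q with
  | zero => simp
  | succ q ih =>
    push_cast
    rw [show x + ((q:ℝ)+1) * π = (x + q*π) + π by ring, Real.cos_add_pi, abs_neg, ih]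

lemma abs_cos_odd_le (n k : ℕ) (hn : 1 ≤ n) :
    |Real.cos ((2*(k:ℝ)+1) * (π / (2*(n:ℝ))))| ≤ Real.cos (π / (2*(n:ℝ))) := by
  set m : ℕ := 2*k+1 with hm
  set q : ℕ := m / (2*n) with hq
  set r : ℕ := m % (2*n) with hr
  have h2n : 0 < 2*n := by omega
  have hmqr : m = 2*n*q + r := (Nat.div_add_mod m (2*n)).symm
  have hrodd : r % 2 = 1 := by
    have : m % 2 = 1 := by omega
    rw [hr, Nat.mod_mod_of_dvd m ⟨n, rfl⟩]; exact this
  have hr1 : 1 ≤ r := by omega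
  have hr2 : r + 1 ≤ 2*n := by have := Nat.mod_lt m h2n; omega
  have h2nR : (0:ℝ) < 2*(n:ℝ) := by positivity
  have hangle : (2*(k:ℝ)+1) * (π / (2*(n:ℝ))) = (r:ℝ) * (π / (2*(n:ℝ))) + q * π := by
    have hc : 2*(k:ℝ)+1 = 2*(n:ℝ)*(q:ℝ) + (r:ℝ) := by exact_mod_cast congrArg (Nat.cast (R := ℝ)) hmqr
    rw [hc]; field_simp; ring
  rw [hangle, abs_cos_add_nat_mul_pi]
  set ψ := π / (2*(n:ℝ)) with hψ
  have hψpos : 0 < ψ := by positivity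
  set θ := (r:ℝ) * ψ with hθ
  have hψθ : ψ ≤ θ := by
    rw [hθ]
    nlinarith [show (1:ℝ) ≤ (r:ℝ) by exact_mod_cast hr1]
  have hθle : θ ≤ π - ψ := by
    have hrle : (r:ℝ) ≤ 2*(n:ℝ) - 1 := by
      have : (r:ℝ) + 1 ≤ 2*(n:ℝ) := by exact_mod_cast hr2
      linarith
    have : θ ≤ (2*(n:ℝ) - 1) * ψ := by
      rw [hθ]; nlinarith
    calc θ ≤ (2*(n:ℝ) - 1) * ψ := this
      _ = π - ψ := by rw [hψ]; field_simp
  have hθpi : θ ≤ π := by linarith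
  rw [abs_le]
  constructor
  · have h := Real.cos_le_cos_of_nonneg_of_le_pi hψpos.le (by linarith : π - θ ≤ π)
      (by linarith : ψ ≤ π - θ)
    rw [Real.cos_pi_sub] at h
    linarith
  · exact Real.cos_le_cos_of_nonneg_of_le_pi hψpos.le hθpi hψθ

lemma scalar_bound (n k : ℕ) (hn : 1 ≤ n) (φ : ℝ) (hφ : φ = π / (2*(n:ℝ))) :
    |Real.cos (2*((k:ℝ)*φ)) - Real.tan φ * Real.sin (2*((k:ℝ)*φ))| ≤ 1 := by
  rcases eq_or_lt_of_le hn with h1 | h2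
  · have hφ2 : φ = π / 2 := by rw [hφ, ← h1]; norm_num
    rw [hφ2, Real.tan_pi_div_two]
    simpa using Real.abs_cos_le_one (2*((k:ℝ)*(π/2)))
  · have hnR : (2:ℝ) < 2*(n:ℝ) := by
      have : (2:ℝ) ≤ (n:ℝ) := by exact_mod_cast h2
      linarith
    have hφpos : 0 < φ := by rw [hφ]; positivity
    have hφlt : φ < π / 2 := by
      rw [hφ]
      rw [div_lt_div_iff₀ (by linarith) (by norm_num)]
      nlinarith [Real.pi_pos]
    have hcos : 0 < Real.cos φ :=
      Real.cos_pos_of_mem_Ioo ⟨by linarith [Real.pi_pos], hφlt⟩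
    have key : Real.cos (2*((k:ℝ)*φ)) - Real.tan φ * Real.sin (2*((k:ℝ)*φ)) =
        Real.cos ((2*(k:ℝ)+1)*φ) / Real.cos φ := by
      rw [Real.tan_eq_sin_div_cos,
        show (2*(k:ℝ)+1)*φ = 2*((k:ℝ)*φ) + φ by ring, Real.cos_add]
      field_simp
    rw [key, abs_div, abs_of_pos hcos, div_le_one hcos]
    have := abs_cos_odd_le n k hn
    rw [← hφ] at this
    exact this

theorem stmt6 (n : ℕ) (hn : 1 ≤ n) (φ : ℝ) (hφ : φ = Real.pi / (2 * (n : ℝ)))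
    (l : List (Matrix (Fin 2) (Fin 2) ℝ)) (hl : ∀ B ∈ l, B = P φ ∨ B = R φ) :
    opNorm l.prod ≤ opNorm (P φ) := by
  have hkey : ∀ m : List (Matrix (Fin 2) (Fin 2) ℝ), (∀ B ∈ m, B = P φ ∨ B = R φ) →
      (∃ k : ℕ, m.prod = R φ ^ k) ∨
      (∃ (c : ℝ) (a b : ℕ), |c| ≤ 1 ∧ m.prod = c • (R φ ^ a * (P φ * R φ ^ b))) := by
    intro m hm
    induction m with
    | nil => exact Or.inl ⟨0, by simp⟩
    | cons B t ih =>
      have hB := hm B List.mem_cons_self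
      have ht : ∀ B ∈ t, B = P φ ∨ B = R φ := fun B hB => hm B (List.mem_cons_of_mem _ hB)
      rw [List.prod_cons]
      rcases ih ht with ⟨k, hk⟩ | ⟨c, a, b, hc, hprod⟩
      · rcases hB with hB | hB
        · -- B = P
          exact Or.inr ⟨1, 0, k, by simp, by rw [hB, hk]; simp⟩
        · exact Or.inl ⟨k+1, by rw [hB, hk, ← pow_succ']⟩
      · rcases hB with hB | hB
        · -- B = P, absorb
          set s := Real.cos (2*((a:ℝ)*φ)) - Real.tan φ * Real.sin (2*((a:ℝ)*φ)) with hs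
          have hsle : |s| ≤ 1 := scalar_bound n a hn φ hφ
          refine Or.inr ⟨c * s, 0, b, ?_, ?_⟩
          · rw [abs_mul]
            calc |c| * |s| ≤ 1 * 1 := by
                  apply mul_le_mul hc hsle (abs_nonneg _) zero_le_one
              _ = 1 := by norm_num
          · have habs : P φ * (R φ ^ a * (P φ * R φ ^ b)) = s • (P φ * R φ ^ b) := by
              rw [show P φ * (R φ ^ a * (P φ * R φ ^ b)) = (P φ * (R φ ^ a * P φ)) * R φ ^ b by
                noncomm_ring, R_pow, P_mul_R_mul_P, ← hs, smul_mul_assoc]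
            rw [hB, hprod, mul_smul_comm, habs, smul_smul, pow_zero, one_mul]
        · refine Or.inr ⟨c, a+1, b, hc, ?_⟩
          rw [hB, hprod, mul_smul_comm]
          congr 1
          rw [← mul_assoc, ← pow_succ']
  rw [opNorm_eq, opNorm_eq]
  rcases hkey l hl with ⟨k, hk⟩ | ⟨c, a, b, hc, hprod⟩
  · rw [hk, R_pow]
    exact le_trans (norm_R_le _) (one_le_norm_P φ)
  · rw [hprod]
    have h1 : ‖R φ ^ a‖ ≤ 1 := by rw [R_pow]; exact norm_R_le _
    have h2 : ‖R φ ^ b‖ ≤ 1 := by rw [R_pow]; exact norm_R_le _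
    have hPnn : 0 ≤ ‖P φ‖ := le_trans zero_le_one (one_le_norm_P φ)
    have hm1 : ‖P φ * R φ ^ b‖ ≤ ‖P φ‖ := by
      calc ‖P φ * R φ ^ b‖ ≤ ‖P φ‖ * ‖R φ ^ b‖ := Matrix.l2_opNorm_mul _ _
        _ ≤ ‖P φ‖ * 1 := by nlinarith [norm_nonneg (R φ ^ b)]
        _ = ‖P φ‖ := mul_one _
    have hm2 : ‖R φ ^ a * (P φ * R φ ^ b)‖ ≤ ‖P φ‖ := by
      calc ‖R φ ^ a * (P φ * R φ ^ b)‖ ≤ ‖R φ ^ a‖ * ‖P φ * R φ ^ b‖ := Matrix.l2_opNorm_mul _ _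
        _ ≤ 1 * ‖P φ‖ := by nlinarith [norm_nonneg (R φ ^ a), norm_nonneg (P φ * R φ ^ b)]
        _ = ‖P φ‖ := one_mul _
    calc ‖c • (R φ ^ a * (P φ * R φ ^ b))‖ = |c| * ‖R φ ^ a * (P φ * R φ ^ b)‖ := by
          rw [norm_smul, Real.norm_eq_abs]
      _ ≤ 1 * ‖P φ‖ := by nlinarith [abs_nonneg c, norm_nonneg (R φ ^ a * (P φ * R φ ^ b))]
      _ = ‖P φ‖ := one_mul _
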